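/- For every finite simple graph G, the chromatic number satisfies χ(G) ≤ wd(G) + 1. -/

import Mathlib

open scoped Classical

namespace WeakDegeneracy

variable {V : Type} [Fintype V]

/-- `WRem G S f` means all vertices of `S` can be removed from `G` (restricted to `S`)
by a sequence of legal `Delete` and `DeleteSave` operations, starting from the
value function `f`.  Legality of a step requires the resulting function to be
nonnegative on the remaining vertices. -/
inductive WRem (G : SimpleGraph V) : Finset V → (V → ℤ) → Prop
  | empty (f : V → ℤ) : WRem G ∅ f
  | del {S : Finset V} {f : V → ℤ} (u : V) (hu : u ∈ S)
      (hleg : ∀ v ∈ S.erase u, 0 ≤ (if G.Adj u v then f v - 1 else f v))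
      (h : WRem G (S.erase u) (fun v => if G.Adj u v then f v - 1 else f v)) :
      WRem G S f
  | delSave {S : Finset V} {f : V → ℤ} (u w : V) (hu : u ∈ S) (hw : w ∈ S)
      (hadj : G.Adj u w) (hgt : f w < f u)
      (hleg : ∀ v ∈ S.erase u, 0 ≤ (if G.Adj u v ∧ v ≠ w then f v - 1 else f v))
      (h : WRem G (S.erase u) (fun v => if G.Adj u v ∧ v ≠ w then f v - 1 else f v)) :
      WRem G S f

/-- `G` is weakly `f`-degenerate: all vertices can be removed by legal operations. -/
def WeaklyFDegenerate (G : SimpleGraph V) (f : V → ℤ) : Prop :=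
  WRem G Finset.univ f

/-- `G` is weakly `d`-degenerate: weakly `f`-degenerate for the constant function `d`. -/
def WeaklyDegenerate (G : SimpleGraph V) (d : ℕ) : Prop :=
  WeaklyFDegenerate G (fun _ => (d : ℤ))

/-- The weak degeneracy of `G`: the least `d` such that `G` is weakly `d`-degenerate. -/
noncomputable def weakDeg (G : SimpleGraph V) : ℕ :=
  sInf {d : ℕ | WeaklyDegenerate G d}
lemma wrem_of_card_le (G : SimpleGraph V) :
    ∀ (n : ℕ) (S : Finset V) (f : V → ℤ), S.card ≤ n →
      (∀ v ∈ S, (S.card : ℤ) - 1 ≤ f v) → WRem G S f := by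
  intro n
  induction n with
  | zero =>
    intro S f hS _
    have : S = ∅ := Finset.card_eq_zero.mp (Nat.le_zero.mp hS)
    subst this; exact WRem.empty f
  | succ n ih =>
    intro S f hS hf
    rcases S.eq_empty_or_nonempty with rfl | ⟨u, hu⟩
    · exact WRem.empty f
    have hce : (S.erase u).card = S.card - 1 := Finset.card_erase_of_mem hu
    have h1 : 1 ≤ S.card := Finset.card_pos.mpr ⟨u, hu⟩
    refine WRem.del u hu ?_ ?_
    · intro v hv
      have h2 : 2 ≤ S.card := by
        have : 1 ≤ (S.erase u).card := Finset.card_pos.mpr ⟨v, hv⟩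
        omega
      have := hf v (Finset.mem_of_mem_erase hv)
      have h2' : (2 : ℤ) ≤ (S.card : ℤ) := by exact_mod_cast h2
      split <;> linarith
    · apply ih
      · omega
      · intro v hv
        have := hf v (Finset.mem_of_mem_erase hv)
        have : ((S.erase u).card : ℤ) = (S.card : ℤ) - 1 := by
          rw [hce]; push_cast [h1]; ring
        rw [this]
        split <;> linarith [hf v (Finset.mem_of_mem_erase hv)]

lemma exists_coloring {G : SimpleGraph V} {S : Finset V} {f : V → ℤ}
    (h : WRem G S f) :
    (∀ v ∈ S, 0 ≤ f v) → ∀ L : V → Finset ℤ, (∀ v ∈ S, f v < (L v).card) →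
      ∃ c : V → ℤ, (∀ v ∈ S, c v ∈ L v) ∧
        ∀ x ∈ S, ∀ y ∈ S, G.Adj x y → c x ≠ c y := by
  induction h with
  | empty f => intro _ L _; exact ⟨fun _ => 0, by simp, by simp⟩
  | @del S f u hu hleg h ih =>
    intro hf L hL
    have hLu : (L u).Nonempty := by
      have h1 := hf u hu
      have h2 := hL u hu
      have : (0 : ℤ) < (L u).card := lt_of_le_of_lt h1 h2
      exact Finset.card_pos.mp (by exact_mod_cast this)
    obtain ⟨α, hα⟩ := hLu
    set L' : V → Finset ℤ := fun v => if G.Adj u v then (L v).erase α else L v with hL'def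
    have hL' : ∀ v ∈ S.erase u,
        (if G.Adj u v then f v - 1 else f v) < ((L' v).card : ℤ) := by
      intro v hv
      have hcard := hL v (Finset.mem_of_mem_erase hv)
      by_cases hA : G.Adj u v <;> simp only [hL'def, hA, if_true, if_false]
      · have herase : (L v).card - 1 ≤ ((L v).erase α).card :=
          Finset.pred_card_le_card_erase
        omega
      · exact hcard
    obtain ⟨c', hc'1, hc'2⟩ := ih hleg L' hL'
    refine ⟨Function.update c' u α, ?_, ?_⟩
    · intro v hv
      by_cases hvu : v = u
      · subst hvu; simpa using hα
      · rw [Function.update_of_ne hvu]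
        have := hc'1 v (Finset.mem_erase.mpr ⟨hvu, hv⟩)
        by_cases hA : G.Adj u v
        · simp only [hL'def, hA, if_true] at this
          exact Finset.mem_of_mem_erase this
        · simpa only [hL'def, hA, if_false] using this
    · intro x hx y hy hxy
      by_cases hxu : x = u <;> by_cases hyu : y = u
      · exact absurd (hxu.trans hyu.symm) hxy.ne
      · subst hxu
        rw [Function.update_self, Function.update_of_ne hyu]
        have := hc'1 y (Finset.mem_erase.mpr ⟨hyu, hy⟩)
        simp only [hL'def, hxy, if_true] at this
        exact fun heq => (Finset.ne_of_mem_erase this) heq.symm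
      · subst hyu
        rw [Function.update_self, Function.update_of_ne hxu]
        have := hc'1 x (Finset.mem_erase.mpr ⟨hxu, hx⟩)
        simp only [hL'def, hxy.symm, if_true] at this
        exact Finset.ne_of_mem_erase this
      · rw [Function.update_of_ne hxu, Function.update_of_ne hyu]
        exact hc'2 x (Finset.mem_erase.mpr ⟨hxu, hx⟩)
          y (Finset.mem_erase.mpr ⟨hyu, hy⟩) hxy
  | @delSave S f u w hu hw hadj hgt hleg h ih =>
    intro hf L hL
    have hfw : 0 ≤ f w := hf w hw
    have hLu : (L u).Nonempty := by
      have h2 := hL u hu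
      have : (0 : ℤ) < (L u).card := lt_of_le_of_lt (le_trans hfw hgt.le) h2
      exact Finset.card_pos.mp (by exact_mod_cast this)
    obtain ⟨α, hαu, hαw⟩ :
        ∃ α ∈ L u, α ∈ L w → f w + 2 ≤ ((L w).card : ℤ) := by
      by_cases hsub : L u ⊆ L w
      · obtain ⟨α, hα⟩ := hLu
        refine ⟨α, hα, fun _ => ?_⟩
        have h1 : ((L u).card : ℤ) ≤ (L w).card := by
          exact_mod_cast Finset.card_le_card hsub
        have h2 := hL u hu
        linarith
      · obtain ⟨α, hα1, hα2⟩ := Finset.not_subset.mp hsub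
        exact ⟨α, hα1, fun hmem => absurd hmem hα2⟩
    set L' : V → Finset ℤ := fun v => if G.Adj u v then (L v).erase α else L v with hL'def
    have hL' : ∀ v ∈ S.erase u,
        (if G.Adj u v ∧ v ≠ w then f v - 1 else f v) < ((L' v).card : ℤ) := by
      intro v hv
      have hcard := hL v (Finset.mem_of_mem_erase hv)
      by_cases hA : G.Adj u v
      · by_cases hvw : v = w
        · have hcond : ¬(G.Adj u v ∧ v ≠ w) := by simp [hvw]
          rw [if_neg hcond]
          have hLv : L' v = (L v).erase α := by simp [hL'def, hA]
          rw [hLv]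
          by_cases hm : α ∈ L v
          · have h2 : f w + 2 ≤ ((L w).card : ℤ) := hαw (hvw ▸ hm)
            rw [hvw] at hcard ⊢
            rw [Finset.card_erase_of_mem (hvw ▸ hm)]
            have h1 : 1 ≤ (L w).card := Finset.card_pos.mpr ⟨α, hvw ▸ hm⟩
            omega
          · rw [Finset.erase_eq_of_notMem hm]; exact hcard
        · simp only [hL'def, hA, hvw, if_true, ne_eq, not_false_iff, and_true]
          have herase : (L v).card - 1 ≤ ((L v).erase α).card :=
            Finset.pred_card_le_card_erase
          omega
      · simp only [hL'def, hA, if_false, false_and]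
        exact hcard
    obtain ⟨c', hc'1, hc'2⟩ := ih hleg L' hL'
    refine ⟨Function.update c' u α, ?_, ?_⟩
    · intro v hv
      by_cases hvu : v = u
      · subst hvu; simpa using hαu
      · rw [Function.update_of_ne hvu]
        have := hc'1 v (Finset.mem_erase.mpr ⟨hvu, hv⟩)
        by_cases hA : G.Adj u v
        · simp only [hL'def, hA, if_true] at this
          exact Finset.mem_of_mem_erase this
        · simpa only [hL'def, hA, if_false] using this
    · intro x hx y hy hxy
      by_cases hxu : x = u <;> by_cases hyu : y = u
      · exact absurd (hxu.trans hyu.symm) hxy.ne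
      · subst hxu
        rw [Function.update_self, Function.update_of_ne hyu]
        have := hc'1 y (Finset.mem_erase.mpr ⟨hyu, hy⟩)
        simp only [hL'def, hxy, if_true] at this
        exact fun heq => (Finset.ne_of_mem_erase this) heq.symm
      · subst hyu
        rw [Function.update_self, Function.update_of_ne hxu]
        have := hc'1 x (Finset.mem_erase.mpr ⟨hxu, hx⟩)
        simp only [hL'def, hxy.symm, if_true] at this
        exact Finset.ne_of_mem_erase this
      · rw [Function.update_of_ne hxu, Function.update_of_ne hyu]
        exact hc'2 x (Finset.mem_erase.mpr ⟨hxu, hx⟩)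
          y (Finset.mem_erase.mpr ⟨hyu, hy⟩) hxy

/-- For every finite simple graph `G`, the chromatic number satisfies
`χ(G) ≤ wd(G) + 1`. -/
theorem chromaticNumber_le_weakDeg_add_one {V : Type} [Fintype V] (G : SimpleGraph V) :
    G.chromaticNumber ≤ (weakDeg G : ℕ∞) + 1 := by
  have hne : WeaklyDegenerate G (Fintype.card V) := by
    apply wrem_of_card_le G (Fintype.card V)
    · exact le_of_eq (Finset.card_univ)
    · intro v _
      rw [Finset.card_univ]
      linarith
  have hmem : WeaklyDegenerate G (weakDeg G) := Nat.sInf_mem (s := {d : ℕ | WeaklyDegenerate G d}) ⟨_, hne⟩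
  set d := weakDeg G with hd
  have hcardIcc : (Finset.Icc (0 : ℤ) (d : ℤ)).card = d + 1 := by
    rw [Int.card_Icc]; omega
  obtain ⟨c, hc1, hc2⟩ := exists_coloring hmem
    (fun v _ => by positivity)
    (fun _ => Finset.Icc (0 : ℤ) (d : ℤ))
    (by intro v _; rw [hcardIcc]; push_cast; linarith)
  have hcb : ∀ v : V, 0 ≤ c v ∧ c v ≤ d := by
    intro v
    have := hc1 v (Finset.mem_univ v)
    exact Finset.mem_Icc.mp this
  have hcol : G.Colorable (d + 1) := by
    refine ⟨SimpleGraph.Coloring.mk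
      (fun v => ⟨(c v).toNat, by have := hcb v; omega⟩) ?_⟩
    intro x y hxy heq
    have hne' := hc2 x (Finset.mem_univ x) y (Finset.mem_univ y) hxy
    have hx := hcb x
    have hy := hcb y
    have h3 : (c x).toNat = (c y).toNat := congrArg Fin.val heq
    omega
  have := hcol.chromaticNumber_le
  calc G.chromaticNumber ≤ ((d + 1 : ℕ) : ℕ∞) := this
    _ = (d : ℕ∞) + 1 := by push_cast; rfl

end WeakDegeneracy
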